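/- Let k ≥ 2, d ≥ 1, and let S = ((x_1,y_1),…,(x_m,y_m)) be a training set with each ‖x_i‖_∞ ≤ 1, with training loss L. Then for every W ∈ ℝ^{k×d}, every column index r ∈ {1,…,d}, and every u ∈ ℝ^k, setting U = u e_rᵀ (the matrix whose r-th column is u and all other columns are zero), one has L(W − U) ≤ L(W) − ⟨∇L(W), U⟩ + ‖u‖_∞², where ⟨A,B⟩ = Σ_{q,r} A_{q,r} B_{q,r} is the entrywise (Frobenius) inner product and ∇L(W) is the gradient matrix of L at W. -/

import Mathlib

open scoped BigOperators

section AuxSmoothness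

open Real Finset

-- Lemma A: sinh h ≤ h * cosh h for 0 ≤ h
lemma lemA' : ∀ {h : ℝ}, 0 ≤ h → Real.sinh h ≤ h * Real.cosh h := by
  intro h hh
  have hmono : Monotone (fun x : ℝ => x * Real.cosh x - Real.sinh x) := by
    apply monotone_of_deriv_nonneg
    · exact (differentiable_id.mul Real.differentiable_cosh).sub Real.differentiable_sinh
    · intro z
      have hd : HasDerivAt (fun x : ℝ => x * Real.cosh x - Real.sinh x)
          (1 * Real.cosh z + z * Real.sinh z - Real.cosh z) z :=
        ((hasDerivAt_id z).mul (Real.hasDerivAt_cosh z)).sub (Real.hasDerivAt_sinh z)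
      rw [hd.deriv]
      have : (1 : ℝ) * Real.cosh z + z * Real.sinh z - Real.cosh z = z * Real.sinh z := by ring
      rw [this]
      rcases le_or_gt 0 z with hz | hz
      · exact mul_nonneg hz (Real.sinh_nonneg_iff.2 hz)
      · nlinarith [Real.sinh_nonpos_iff.2 hz.le]
  have := hmono hh
  simp only [Real.sinh_zero, Real.cosh_zero, mul_zero, zero_mul, sub_zero, zero_sub, neg_nonpos] at this
  linarith [this]

-- Lemma B: h * cosh h - sinh h ≤ (h^2/2) * cosh h for 0 ≤ h
lemma lemB' : ∀ {h : ℝ}, 0 ≤ h → h * Real.cosh h - Real.sinh h ≤ (h ^ 2 / 2) * Real.cosh h := by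
  intro h hh
  set f : ℝ → ℝ := fun x => (x ^ 2 / 2) * Real.cosh x - (x * Real.cosh x - Real.sinh x) with hf
  have hderiv : ∀ z : ℝ, HasDerivAt f
      ((z * Real.cosh z + (z ^ 2 / 2) * Real.sinh z) -
        ((1 * Real.cosh z + z * Real.sinh z) - Real.cosh z)) z := by
    intro z
    have h1 : HasDerivAt (fun x : ℝ => x ^ 2 / 2) z z := by
      have := (hasDerivAt_pow 2 z).div_const 2
      simpa using this.congr_deriv (by push_cast; ring)
    exact ((h1.mul (Real.hasDerivAt_cosh z)).sub
      (((hasDerivAt_id z).mul (Real.hasDerivAt_cosh z)).sub (Real.hasDerivAt_sinh z)))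
  have hmono : MonotoneOn f (Set.Ici (0:ℝ)) := by
    apply monotoneOn_of_deriv_nonneg (convex_Ici 0)
    · exact (Continuous.continuousOn (by continuity))
    · intro z _
      exact (hderiv z).differentiableAt.differentiableWithinAt
    · intro z hz
      rw [interior_Ici] at hz
      rw [(hderiv z).deriv]
      have hz0 : (0:ℝ) ≤ z := le_of_lt hz
      have h2 : Real.sinh z ≤ Real.cosh z := by
        nlinarith [Real.cosh_sub_sinh z, Real.exp_pos (-z)]
      have h3 : 0 ≤ Real.sinh z := Real.sinh_nonneg_iff.2 hz0
      nlinarith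
  have h0 : f 0 = 0 := by simp [hf]
  have := hmono (Set.self_mem_Ici) (Set.mem_Ici.2 hh) hh
  rw [h0] at this
  simp only [hf] at this
  linarith

/-- Finite Hoeffding-type bound: if the values `s j` lie within distance `h` of some
center `c`, then `log ∑ F j * exp (s j) ≤ log ∑ F j + (∑ F j * s j) / (∑ F j) + h ^ 2`. -/
lemma key_logSumExp {k : ℕ} (hk : 0 < k) (F s : Fin k → ℝ) (hF : ∀ j, 0 < F j)
    (c h : ℝ) (hh : 0 ≤ h) (hs : ∀ j, |s j - c| ≤ h) :
    Real.log (∑ j, F j * Real.exp (s j)) ≤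
      Real.log (∑ j, F j) + (∑ j, F j * s j) / (∑ j, F j) + h ^ 2 := by
  have : Nonempty (Fin k) := ⟨⟨0, hk⟩⟩
  set S : ℝ := ∑ j, F j with hS
  have hSpos : 0 < S := Finset.sum_pos (fun j _ => hF j) Finset.univ_nonempty
  rcases eq_or_lt_of_le hh with hh0 | hhpos
  · -- h = 0 : all s j = c
    have hsc : ∀ j, s j = c := fun j => by
      have := hs j; rw [← hh0, abs_nonpos_iff, sub_eq_zero] at this; exact this
    have h1 : (∑ j, F j * Real.exp (s j)) = Real.exp c * S := by
      rw [hS, Finset.mul_sum]; exact Finset.sum_congr rfl fun j _ => by rw [hsc j]; ring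
    have h2 : (∑ j, F j * s j) = c * S := by
      rw [hS, Finset.mul_sum]; exact Finset.sum_congr rfl fun j _ => by rw [hsc j]; ring
    rw [h1, h2, Real.log_mul (Real.exp_pos c).ne' hSpos.ne', Real.log_exp,
      mul_div_assoc, div_self hSpos.ne']
    nlinarith [sq_nonneg h]
  · -- h > 0
    set ν : ℝ := (∑ j, F j * (s j - c)) / S with hν
    have hνle : |ν| ≤ h := by
      rw [hν, abs_div, abs_of_pos hSpos, div_le_iff₀ hSpos]
      calc |∑ j, F j * (s j - c)| ≤ ∑ j, |F j * (s j - c)| := Finset.abs_sum_le_sum_abs _ _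
        _ ≤ ∑ j, F j * h := Finset.sum_le_sum fun j _ => by
            rw [abs_mul, abs_of_pos (hF j)]
            exact mul_le_mul_of_nonneg_left (hs j) (hF j).le
        _ = h * S := by rw [hS, ← Finset.sum_mul]; ring
    -- chord bound
    have hchord : (∑ j, F j * Real.exp (s j - c)) ≤ S * Real.cosh h + (Real.sinh h / h) * (ν * S) := by
      have : (∑ j, F j * Real.exp (s j - c)) ≤
          ∑ j, F j * (Real.cosh h + ((s j - c) / h) * Real.sinh h) := by
        apply Finset.sum_le_sum
        intro j _
        apply mul_le_mul_of_nonneg_left _ (hF j).le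
        have ht : |(s j - c) / h| ≤ 1 := by
          rw [abs_div, abs_of_pos hhpos, div_le_one hhpos]; exact hs j
        have := Real.exp_mul_le_cosh_add_mul_sinh ht h
        rwa [div_mul_cancel₀ _ hhpos.ne'] at this
      refine this.trans_eq ?_
      have hνS : ν * S = ∑ j, F j * (s j - c) := by rw [hν, div_mul_cancel₀ _ hSpos.ne']
      rw [hνS, hS, Finset.sum_mul, Finset.mul_sum, ← Finset.sum_add_distrib]
      exact Finset.sum_congr rfl fun j _ => by ring
    -- the value inside log
    have hA : (0:ℝ) < Real.cosh h + (Real.sinh h / h) * ν := by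
      have h1 : Real.sinh h / h * ν ≥ -(Real.sinh h) := by
        have hsh : 0 ≤ Real.sinh h := Real.sinh_nonneg_iff.2 hh
        have : Real.sinh h / h * ν ≥ Real.sinh h / h * (-h) := by
          apply mul_le_mul_of_nonneg_left _ (div_nonneg hsh hh)
          linarith [abs_le.1 hνle]
        calc Real.sinh h / h * ν ≥ Real.sinh h / h * (-h) := this
          _ = -(Real.sinh h) := by field_simp
      nlinarith [Real.cosh_sub_sinh h, Real.exp_pos (-h)]
    have hsum_eq : (∑ j, F j * Real.exp (s j)) = Real.exp c * (∑ j, F j * Real.exp (s j - c)) := by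
      rw [Finset.mul_sum]
      refine Finset.sum_congr rfl fun j _ => ?_
      rw [show s j = c + (s j - c) by ring, Real.exp_add]
      ring_nf
    have hsum_pos : (0:ℝ) < ∑ j, F j * Real.exp (s j - c) :=
      Finset.sum_pos (fun j _ => mul_pos (hF j) (Real.exp_pos _)) Finset.univ_nonempty
    have step1 : Real.log (∑ j, F j * Real.exp (s j)) ≤
        c + Real.log S + Real.log (Real.cosh h + (Real.sinh h / h) * ν) := by
      rw [hsum_eq, Real.log_mul (Real.exp_pos c).ne' hsum_pos.ne', Real.log_exp]
      have hch2 : ∑ j, F j * Real.exp (s j - c) ≤ S * (Real.cosh h + Real.sinh h / h * ν) :=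
        hchord.trans_eq (by ring)
      have := Real.log_le_log hsum_pos hch2
      rw [Real.log_mul hSpos.ne' hA.ne'] at this
      linarith
    -- log A ≤ ν + h^2
    have hcoshpos : (0:ℝ) < Real.cosh h := Real.cosh_pos h
    have step2 : Real.log (Real.cosh h + (Real.sinh h / h) * ν) ≤ ν + h ^ 2 := by
      have hlog1 : Real.log (Real.cosh h + (Real.sinh h / h) * ν) ≤
          Real.log (Real.cosh h) + (Real.sinh h / h) * ν / Real.cosh h := by
        have hratio : (0:ℝ) < (Real.cosh h + Real.sinh h / h * ν) / Real.cosh h :=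
          div_pos hA hcoshpos
        have := Real.log_le_sub_one_of_pos hratio
        rw [Real.log_div hA.ne' hcoshpos.ne'] at this
        have h2 : (Real.cosh h + Real.sinh h / h * ν) / Real.cosh h - 1
            = Real.sinh h / h * ν / Real.cosh h := by field_simp; ring
        rw [h2] at this; linarith
      have hlogcosh : Real.log (Real.cosh h) ≤ h ^ 2 / 2 := by
        have := Real.log_le_log hcoshpos (Real.cosh_le_exp_half_sq h)
        rwa [Real.log_exp] at this
      have hterm : Real.sinh h / h * ν / Real.cosh h ≤ ν + h ^ 2 / 2 := by
        have hD : 0 ≤ h * Real.cosh h - Real.sinh h := by linarith [lemA' hh]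
        have hB := lemB' hh
        have habs := abs_le.1 hνle
        rw [div_le_iff₀ hcoshpos, div_mul_eq_mul_div, div_le_iff₀ hhpos]
        nlinarith [mul_nonneg (by linarith : (0:ℝ) ≤ h + ν) hD,
          mul_le_mul_of_nonneg_left hB hh]
      linarith
    have hsplit : (∑ j, F j * s j) = c * S + ν * S := by
      rw [hν, div_mul_cancel₀ _ hSpos.ne', hS, Finset.mul_sum, ← Finset.sum_add_distrib]
      exact Finset.sum_congr rfl fun j _ => by ring
    have hmean : (∑ j, F j * s j) / S = c + ν := by
      rw [hsplit, add_div, mul_div_assoc, div_self hSpos.ne', mul_one,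
        mul_div_assoc, div_self hSpos.ne', mul_one]
    rw [hmean]
    linarith

end AuxSmoothness

noncomputable section

/-- The multiclass logistic loss for label `y`. -/
def mcLoss (k : ℕ) (y : Fin k) (v : Fin k → ℝ) : ℝ :=
  Real.log (∑ y' : Fin k, Real.exp ((if y' ≠ y then (1 : ℝ) else 0) - v y + v y'))

/-- The average training loss of the matrix `W` (viewed as `Fin k → Fin d → ℝ`). -/
def trainLoss (k d m : ℕ) (x : Fin m → Fin d → ℝ) (y : Fin m → Fin k)
    (W : Fin k → Fin d → ℝ) : ℝ :=
  (1 / (m : ℝ)) * ∑ i : Fin m, mcLoss k (y i) (fun q => ∑ j : Fin d, W q j * x i j)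

/-- **Lemma 2 (smoothness of the training loss for rank-one column updates).**
For `U = u eᵣᵀ`, `L(W - U) ≤ L(W) - ⟨∇L(W), U⟩ + ‖u‖_∞²`. -/
theorem trainLoss_smoothness_column_update
    (k d m : ℕ) (hk : 2 ≤ k) (hd : 1 ≤ d) (hm : 1 ≤ m)
    (x : Fin m → Fin d → ℝ) (y : Fin m → Fin k)
    (hx : ∀ i : Fin m, ‖x i‖ ≤ 1)
    (W : Fin k → Fin d → ℝ) (r : Fin d) (u : Fin k → ℝ)
    (U : Fin k → Fin d → ℝ) (hU : U = fun q j => if j = r then u q else 0) :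
    trainLoss k d m x y (fun q j => W q j - U q j) ≤
      trainLoss k d m x y W - fderiv ℝ (trainLoss k d m x y) W U + ‖u‖ ^ 2 := by
  classical
  have hk0 : 0 < k := by omega
  have : Nonempty (Fin k) := Fin.pos_iff_nonempty.1 hk0
  have hm0 : ((m : ℝ)) ≠ 0 := Nat.cast_ne_zero.2 (by omega)
  -- the continuous linear maps W ↦ (Wxᵢ)_q
  set Lm : Fin m → Fin k → ((Fin k → Fin d → ℝ) →L[ℝ] ℝ) :=
    fun i q => ∑ j : Fin d, x i j •
      ((ContinuousLinearMap.proj (R := ℝ) (φ := fun _ : Fin d => ℝ) j).comp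
        (ContinuousLinearMap.proj (R := ℝ) (φ := fun _ : Fin k => (Fin d → ℝ)) q)) with hLm
  have hLapp : ∀ i q (V : Fin k → Fin d → ℝ), Lm i q V = ∑ j : Fin d, V q j * x i j := by
    intro i q V
    rw [hLm]
    simp only [ContinuousLinearMap.sum_apply, ContinuousLinearMap.smul_apply,
      ContinuousLinearMap.coe_comp', Function.comp_apply, ContinuousLinearMap.proj_apply,
      smul_eq_mul]
    exact Finset.sum_congr rfl fun j _ => mul_comm _ _
  set T : Fin m → Fin k → ((Fin k → Fin d → ℝ) →L[ℝ] ℝ) :=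
    fun i y' => Lm i y' - Lm i (y i) with hT
  set ci : Fin m → Fin k → ℝ := fun i y' => if y' ≠ y i then (1:ℝ) else 0 with hci
  -- rewrite trainLoss in terms of the CLMs
  have htr : trainLoss k d m x y =
      fun W' => (1 / (m : ℝ)) *
        ∑ i : Fin m, Real.log (∑ y' : Fin k, Real.exp (ci i y' + (T i y') W')) := by
    funext W'
    unfold trainLoss mcLoss
    congr 1
    refine Finset.sum_congr rfl fun i _ => ?_
    congr 1
    refine Finset.sum_congr rfl fun y' _ => ?_
    congr 1
    rw [hT]
    simp only [ContinuousLinearMap.sub_apply, hLapp, hci]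
    ring
  -- derivative
  set Φ : (Fin k → Fin d → ℝ) →L[ℝ] ℝ :=
    (1 / (m : ℝ)) • ∑ i : Fin m,
      ((∑ y' : Fin k, Real.exp (ci i y' + (T i y') W))⁻¹ •
        ∑ y' : Fin k, Real.exp (ci i y' + (T i y') W) • T i y') with hΦ
  have hpos : ∀ i, (0:ℝ) < ∑ y' : Fin k, Real.exp (ci i y' + (T i y') W) :=
    fun i => Finset.sum_pos (fun j _ => Real.exp_pos _) Finset.univ_nonempty
  have hDF : HasFDerivAt (trainLoss k d m x y) Φ W := by
    rw [htr, hΦ]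
    refine HasFDerivAt.const_mul ?_ _
    refine HasFDerivAt.fun_sum fun i _ => ?_
    refine HasFDerivAt.log ?_ (hpos i).ne'
    exact HasFDerivAt.fun_sum fun y' _ => ((T i y').hasFDerivAt.const_add (ci i y')).exp
  rw [hDF.fderiv]
  -- value of the derivative on U
  set Dval : Fin m → ℝ := fun i =>
    (∑ y' : Fin k, Real.exp (ci i y' + (T i y') W))⁻¹ *
      ∑ y' : Fin k, Real.exp (ci i y' + (T i y') W) * ((T i y') U) with hDval
  have hΦU : Φ U = (1 / (m : ℝ)) * ∑ i : Fin m, Dval i := by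
    rw [hΦ]
    simp only [ContinuousLinearMap.smul_apply, ContinuousLinearMap.sum_apply, smul_eq_mul,
      hDval]
  -- value of Lm on U
  have hLU : ∀ i q, Lm i q U = x i r * u q := by
    intro i q
    rw [hLapp, hU]
    simp only []
    rw [Finset.sum_congr rfl (fun j _ => by
      rw [show (if j = r then u q else 0) * x i j = if j = r then x i j * u q else 0 by
        split <;> ring])]
    simp
  -- pointwise bounds
  have hxr : ∀ i : Fin m, |x i r| ≤ 1 := by
    intro i
    calc |x i r| = ‖x i r‖ := (Real.norm_eq_abs _).symm
      _ ≤ ‖x i‖ := norm_le_pi_norm (x i) r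
      _ ≤ 1 := hx i
  have huq : ∀ q, |u q| ≤ ‖u‖ := by
    intro q
    calc |u q| = ‖u q‖ := (Real.norm_eq_abs _).symm
      _ ≤ ‖u‖ := norm_le_pi_norm u q
  -- per-sample inequality
  have hper : ∀ i : Fin m,
      mcLoss k (y i) (fun q => ∑ j : Fin d, (W q j - U q j) * x i j) ≤
        mcLoss k (y i) (fun q => ∑ j : Fin d, W q j * x i j) - Dval i + ‖u‖ ^ 2 := by
    intro i
    set F : Fin k → ℝ := fun y' => Real.exp (ci i y' + (T i y') W) with hF
    set s : Fin k → ℝ := fun y' => Lm i (y i) U - Lm i y' U with hs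
    have hkey := key_logSumExp hk0 F s (fun j => Real.exp_pos _)
      (x i r * u (y i)) ‖u‖ (norm_nonneg u) ?_
    · -- rewrite LHS of goal as key's LHS
      have hLHS : mcLoss k (y i) (fun q => ∑ j : Fin d, (W q j - U q j) * x i j)
          = Real.log (∑ y' : Fin k, F y' * Real.exp (s y')) := by
        unfold mcLoss
        congr 1
        refine Finset.sum_congr rfl fun y' _ => ?_
        rw [hF]
        simp only []
        rw [← Real.exp_add]
        congr 1
        rw [hT, hs]
        simp only [ContinuousLinearMap.sub_apply, hLapp, hci, sub_mul,
          Finset.sum_sub_distrib]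
        ring
      have hMID : mcLoss k (y i) (fun q => ∑ j : Fin d, W q j * x i j)
          = Real.log (∑ y' : Fin k, F y') := by
        unfold mcLoss
        congr 1
        refine Finset.sum_congr rfl fun y' _ => ?_
        rw [hF]
        congr 1
        rw [hT]
        simp only [ContinuousLinearMap.sub_apply, hLapp, hci]
        ring
      have hDv : (∑ y' : Fin k, F y' * s y') / (∑ y' : Fin k, F y') = - Dval i := by
        have e3 : ∀ y' : Fin k, (T i y') U = - s y' := by
          intro y'
          rw [hT, hs]
          simp only [ContinuousLinearMap.sub_apply]
          ring
        have e4 : ∑ y' : Fin k, F y' * ((T i y') U) = - ∑ y' : Fin k, F y' * s y' := by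
          rw [← Finset.sum_neg_distrib]
          exact Finset.sum_congr rfl fun y' _ => by rw [e3 y']; ring
        have e5 : Dval i = (∑ y' : Fin k, F y')⁻¹ * ∑ y' : Fin k, F y' * ((T i y') U) := rfl
        rw [e5, e4, div_eq_inv_mul]
        ring
      rw [hLHS, hMID]
      rw [hDv] at hkey
      linarith
    · -- the centering bound
      intro j
      rw [hs]
      simp only []
      rw [hLU, hLU]
      rw [show x i r * u (y i) - x i r * u j - x i r * u (y i) = -(x i r * u j) by ring]
      rw [abs_neg, abs_mul]
      calc |x i r| * |u j| ≤ 1 * ‖u‖ :=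
            mul_le_mul (hxr i) (huq j) (abs_nonneg _) zero_le_one
        _ = ‖u‖ := one_mul _
  -- assemble
  rw [hΦU]
  simp only [trainLoss]
  have hsum := Finset.sum_le_sum (fun i (_ : i ∈ Finset.univ) => hper i)
  rw [Finset.sum_add_distrib, Finset.sum_sub_distrib, Finset.sum_const, Finset.card_univ,
    Fintype.card_fin, nsmul_eq_mul] at hsum
  have hmpos : (0:ℝ) < 1 / (m:ℝ) := by
    have : (0:ℝ) < (m:ℝ) := by exact_mod_cast (by omega : 0 < m)
    positivity
  have hmul := mul_le_mul_of_nonneg_left hsum hmpos.le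
  have hdist : (1/(m:ℝ)) * ((∑ i : Fin m, mcLoss k (y i) (fun q => ∑ j : Fin d, W q j * x i j)
        - ∑ i : Fin m, Dval i) + (m:ℝ) * ‖u‖ ^ 2)
      = (1/(m:ℝ)) * ∑ i : Fin m, mcLoss k (y i) (fun q => ∑ j : Fin d, W q j * x i j)
        - (1/(m:ℝ)) * ∑ i : Fin m, Dval i + ‖u‖ ^ 2 := by
    field_simp
  rw [hdist] at hmul
  exact hmul
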